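/- Let (B,⌊·,·⌋) be an SSD space and f ∈ PC(B) be a BC-function. Then P_q(f^@) = P_q(f). -/

import Mathlib

noncomputable section

variable {B : Type*} [AddCommGroup B] [Module ℝ B]

/-- The quadratic form `q(b) = ½⌊b,b⌋` associated with a bilinear form. -/
def qForm (br : B →ₗ[ℝ] B →ₗ[ℝ] ℝ) (b : B) : ℝ := (1 / 2) * br b b

/-- The intrinsic conjugate `f^@(c) = sup_{b} (⌊b,c⌋ - f(b))`. -/
def intrinsicConj (br : B →ₗ[ℝ] B →ₗ[ℝ] ℝ) (f : B → EReal) (c : B) : EReal :=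
  ⨆ b : B, ((br b c : ℝ) : EReal) - f b

/-- A proper function from `B` into `(-∞,∞]`: never `⊥` and somewhere finite. -/
def ProperFn (f : B → EReal) : Prop := (∀ b, f b ≠ ⊥) ∧ ∃ b, f b ≠ ⊤

/-- Convexity for `(-∞,∞]`-valued functions. -/
def ConvexFn (f : B → EReal) : Prop :=
  ∀ b c : B, ∀ t : ℝ, 0 ≤ t → t ≤ 1 →
    f (t • b + (1 - t) • c) ≤ (t : EReal) * f b + ((1 - t : ℝ) : EReal) * f c

/-- `A` is q-positive: nonempty and `q(b - c) ≥ 0` for all `b, c ∈ A`. -/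
def QPos (br : B →ₗ[ℝ] B →ₗ[ℝ] ℝ) (A : Set B) : Prop :=
  A.Nonempty ∧ ∀ b ∈ A, ∀ c ∈ A, 0 ≤ qForm br (b - c)

/-- `A` is maximally q-positive. -/
def MaxQPos (br : B →ₗ[ℝ] B →ₗ[ℝ] ℝ) (A : Set B) : Prop :=
  QPos br A ∧ ∀ C : Set B, QPos br C → A ⊆ C → C = A

/-- `Φ_A(b) = sup_{a ∈ A} (⌊a,b⌋ - q(a))`. -/
def PhiA (br : B →ₗ[ℝ] B →ₗ[ℝ] ℝ) (A : Set B) (b : B) : EReal :=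
  ⨆ a : A, ((br (a : B) b - qForm br (a : B) : ℝ) : EReal)

/-- `P_q(f) = {b : f(b) = q(b)}`. -/
def Pq (br : B →ₗ[ℝ] B →ₗ[ℝ] ℝ) (f : B → EReal) : Set B :=
  {b : B | f b = ((qForm br b : ℝ) : EReal)}

/-- `N_q(g) = {b : g(b) = -q(b)}`. -/
def Nq (br : B →ₗ[ℝ] B →ₗ[ℝ] ℝ) (f : B → EReal) : Set B :=
  {b : B | f b = ((-(qForm br b) : ℝ) : EReal)}

/-- `f` is a BC-function: `f^@(b) ≥ f(b) ≥ q(b)` for all `b`. -/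
def IsBC (br : B →ₗ[ℝ] B →ₗ[ℝ] ℝ) (f : B → EReal) : Prop :=
  ∀ b : B, ((qForm br b : ℝ) : EReal) ≤ f b ∧ f b ≤ intrinsicConj br f b

/-- `g` is a TBC-function: `g^@(-b) ≥ g(b) ≥ -q(b)` for all `b`. -/
def IsTBC (br : B →ₗ[ℝ] B →ₗ[ℝ] ℝ) (g : B → EReal) : Prop :=
  ∀ b : B, ((-(qForm br b) : ℝ) : EReal) ≤ g b ∧ g b ≤ intrinsicConj br g (-b)

/-- The effective domain `dom f = {b : f(b) ∈ ℝ}`. -/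
def domE (f : B → EReal) : Set B := {b : B | ∃ r : ℝ, f b = (r : EReal)}


lemma aux_limit (A C D : ℝ) (h : ∀ t : ℝ, 0 < t → t ≤ 1 → A + t * C ≤ D) : A ≤ D := by
  by_contra hcon
  push_neg at hcon
  have h1 := h 1 one_pos le_rfl
  have hC : C < 0 := by linarith
  set t := (D - A) / (2 * C) with ht
  have htpos : 0 < t := div_pos_of_neg_of_neg (by linarith) (by linarith)
  have hCne : C ≠ 0 := hC.ne
  have htC : t * C = (D - A) / 2 := by
    rw [ht]
    field_simp
  have ht1 : t ≤ 1 := by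
    rw [ht, div_le_one_of_neg (by linarith)]
    linarith
  have := h t htpos ht1
  rw [htC] at this
  linarith

/-- if `f ∈ PC(B)` is a BC-function then `P_q(f^@) = P_q(f)`. -/
theorem stmt2 [Nontrivial B] (br : B →ₗ[ℝ] B →ₗ[ℝ] ℝ)
    (hsymm : ∀ b c : B, br b c = br c b)
    (f : B → EReal) (hproper : ProperFn f) (hconv : ConvexFn f)
    (hbc : IsBC br f) :
    Pq br (intrinsicConj br f) = Pq br f := by
  ext b
  simp only [Pq, Set.mem_setOf_eq]
  constructor
  · intro hb
    have h1 := (hbc b).1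
    have h2 := (hbc b).2
    rw [hb] at h2
    exact le_antisymm h2 h1
  · intro hfb
    apply le_antisymm
    · -- sup over c of ⌊c,b⌋ - f c ≤ q b
      apply iSup_le
      intro c
      rcases eq_or_ne (f c) ⊤ with htop | htop
      · rw [htop, EReal.sub_top]
        exact bot_le
      · obtain ⟨r, hr⟩ : ∃ r : ℝ, f c = (r : EReal) := by
          refine ⟨(f c).toReal, ?_⟩
          rw [EReal.coe_toReal htop (hproper.1 c)]
        have key : ∀ t : ℝ, 0 < t → t ≤ 1 →
            (br b c - 2 * qForm br b) + t * qForm br (c - b) ≤ r - qForm br b := by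
          intro t ht ht1
          have hc := hconv c b t ht.le ht1
          rw [hr, hfb] at hc
          have hq := (hbc (t • c + (1 - t) • b)).1
          have hc2 : ((qForm br (t • c + (1 - t) • b) : ℝ) : EReal)
              ≤ (((t * r + (1 - t) * qForm br b : ℝ)) : EReal) := by
            refine hq.trans (hc.trans_eq ?_)
            push_cast
            rfl
          have hreal : qForm br (t • c + (1 - t) • b) ≤ t * r + (1 - t) * qForm br b :=
            EReal.coe_le_coe_iff.mp hc2
          have hsbc := hsymm b c
          simp only [qForm, map_add, map_smul, map_sub, LinearMap.add_apply,
            LinearMap.smul_apply, LinearMap.sub_apply, smul_eq_mul] at hreal ⊢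
          nlinarith [sq_nonneg t, mul_pos ht ht]
        have hA : br b c - 2 * qForm br b ≤ r - qForm br b :=
          aux_limit _ (qForm br (c - b)) _ key
        have hfin : br c b - r ≤ qForm br b := by
          rw [hsymm c b]; linarith
        rw [hr, ← EReal.coe_sub]
        exact_mod_cast hfin
    · -- q b ≤ sup, witness c = b
      have := le_iSup (fun c : B => ((br c b : ℝ) : EReal) - f c) b
      refine le_trans ?_ this
      rw [hfb, ← EReal.coe_sub]
      apply EReal.coe_le_coe_iff.mpr
      simp only [qForm]
      linarith [hsymm b b]
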